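/- Any element f of the biHecke monoid fixing the identity is contracting for Bruhat order: if 1·f = 1 then w·f ≤_B w for all w ∈ W. -/

import Mathlib

open scoped Classical

noncomputable section

variable {B W : Type*} [Group W] {M : CoxeterMatrix B}

/-- The elementary bubble antisorting operator `π_i` on a Coxeter group:
`w·π_i = w` if `i` is a right descent of `w`, and `w·π_i = w s_i` otherwise. -/
noncomputable def piOp (cs : CoxeterSystem M W) (i : B) : W → W :=
  fun w => if cs.IsRightDescent w i then w else w * cs.simple i

/-- The elementary bubble sorting operator `π̄_i` on a Coxeter group:
`w·π̄_i = w s_i` if `i` is a right descent of `w`, and `w·π̄_i = w` otherwise. -/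
noncomputable def pibOp (cs : CoxeterSystem M W) (i : B) : W → W :=
  fun w => if cs.IsRightDescent w i then w * cs.simple i else w

/-- The biHecke monoid: the submonoid of `Function.End W` generated by the antisorting
operators `π_i` and the sorting operators `π̄_i`. -/
noncomputable def biHecke (cs : CoxeterSystem M W) : Submonoid (Function.End W) :=
  Submonoid.closure ({f | ∃ i, f = piOp cs i} ∪ {f | ∃ i, f = pibOp cs i})

/-- Left weak order: `u ≤_L v` iff `ℓ(v u⁻¹) + ℓ(u) = ℓ(v)`. -/
noncomputable def leL (cs : CoxeterSystem M W) (u v : W) : Prop :=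
  cs.length (v * u⁻¹) + cs.length u = cs.length v

/-- Right weak order: `u ≤_R v` iff `ℓ(u) + ℓ(u⁻¹ v) = ℓ(v)`. -/
noncomputable def leR (cs : CoxeterSystem M W) (u v : W) : Prop :=
  cs.length u + cs.length (u⁻¹ * v) = cs.length v

/-- Bruhat order: `u ≤_B v` iff some reduced word of `v` has a subword with product `u`. -/
noncomputable def leB (cs : CoxeterSystem M W) (u v : W) : Prop :=
  ∃ l : List B, cs.IsReduced l ∧ cs.wordProd l = v ∧
    ∃ l' : List B, l'.Sublist l ∧ cs.wordProd l' = u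

/-- Right action of a word of operators: apply the operators from left to right. -/
noncomputable def actWord (ops : B → W → W) (l : List B) (w : W) : W :=
  l.foldl (fun x i => ops i x) w

/-- The function `e_w = π_{w⁻¹ w₀} π̄_{w₀ w}` (given reduced words `l1` for `w⁻¹ w₀` and
`l2` for `w₀ w`), acting on the right. -/
noncomputable def eIdem (cs : CoxeterSystem M W) (l1 l2 : List B) : W → W :=
  fun x => actWord (pibOp cs) l2 (actWord (piOp cs) l1 x)

/-- The parabolic subgroup `W_K`. -/
noncomputable def parab (cs : CoxeterSystem M W) (K : Set B) : Subgroup W :=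
  Subgroup.closure (cs.simple '' K)

/-- `K` is a right block of `w` if `w W_K = W_J w` for some `J`. -/
noncomputable def isRightBlock (cs : CoxeterSystem M W) (w : W) (K : Set B) : Prop :=
  ∃ J : Set B, (fun x => w * x) '' (parab cs K : Set W) = (fun x => x * w) '' (parab cs J : Set W)

/-- `J` is a left block of `w` if `w W_K = W_J w` for some `K`. -/
noncomputable def isLeftBlock (cs : CoxeterSystem M W) (w : W) (J : Set B) : Prop :=
  ∃ K : Set B, (fun x => w * x) '' (parab cs K : Set W) = (fun x => x * w) '' (parab cs J : Set W)

/-- The cutting relation: `v ⊑ w` iff `v = w^K` for some right block `K` of `w`, i.e.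
`w = v · u` with `u ∈ W_K` and `v` has no right descents in `K`. -/
noncomputable def cuts (cs : CoxeterSystem M W) (v w : W) : Prop :=
  ∃ K J : Set B,
    ((fun x => w * x) '' (parab cs K : Set W) = (fun x => x * w) '' (parab cs J : Set W)) ∧
    ∃ u ∈ parab cs K, w = v * u ∧ ∀ k ∈ K, ¬ cs.IsRightDescent v k

/-- Covering relation of left weak order. -/
noncomputable def covL (cs : CoxeterSystem M W) (x y : W) : Prop :=
  leL cs x y ∧ x ≠ y ∧ ∀ z, leL cs x z → leL cs z y → z = x ∨ z = y

end

namespace BHAux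
open CoxeterSystem List

variable {B W : Type*} [Group W] {M : CoxeterMatrix B} (cs : CoxeterSystem M W)

local prefix:100 "s" => cs.simple
local prefix:100 "π" => cs.wordProd
local prefix:100 "ℓ" => cs.length
local prefix:100 "ris" => cs.rightInvSeq
local prefix:100 "lis" => cs.leftInvSeq

/-- The sign-tracking involution used for the parity argument. -/
noncomputable def eta (i : B) : Equiv.Perm (W × ZMod 2) :=
  Function.Involutive.toPerm
    (fun p => (s i * p.1 * s i, p.2 + if p.1 = s i then 1 else 0)) (by
      intro p
      obtain ⟨t, e⟩ := p
      simp only [Prod.mk.injEq]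
      constructor
      · rw [← mul_assoc, ← mul_assoc]
        simp [mul_assoc, cs.simple_mul_simple_cancel_left, cs.simple_mul_simple_cancel_right]
      · have h2 : (s i * (s i * t * s i) * s i) = t := by
          rw [← mul_assoc, ← mul_assoc]
          simp [mul_assoc]
        by_cases h : t = s i
        · subst h
          simp only [cs.simple_mul_simple_self, one_mul]
          simp only [if_pos trivial]
          have h11 : (1 : ZMod 2) + 1 = 0 := rfl
          rw [add_assoc, h11, add_zero]
        · have h3 : ¬ (s i * t * s i = s i) := by
            intro hc
            apply h
            have := congrArg (fun x => s i * x * s i) hc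
            simpa [← mul_assoc, mul_assoc, cs.simple_mul_simple_cancel_left,
              cs.simple_mul_simple_cancel_right] using this
          simp [h, h3])

lemma eta_apply (i : B) (t : W) (e : ZMod 2) :
    eta cs i (t, e) = (s i * t * s i, e + if t = s i then 1 else 0) := rfl

lemma prod_map_eta (l : List B) (t : W) (e : ZMod 2) :
    ((l.map (eta cs)).prod) (t, e) =
      (π l * t * (π l)⁻¹, e + ((ris l).count t : ZMod 2)) := by
  induction l generalizing e with
  | nil => simp [CoxeterSystem.wordProd_nil]
  | cons i l ih =>
    have hmul : ((List.map (eta cs) (i :: l)).prod) (t, e)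
        = (eta cs i) (((List.map (eta cs) l).prod) (t, e)) := by
      simp [List.map_cons, List.prod_cons, Equiv.Perm.mul_apply]
    rw [hmul, ih, eta_apply]
    have hris : ris (i :: l) = ((π l)⁻¹ * s i * (π l)) :: ris l := rfl
    rw [hris, List.count_cons]
    have hiff : ((π l)⁻¹ * s i * (π l) = t) ↔ (π l * t * (π l)⁻¹ = s i) := by
      constructor
      · intro h; rw [← h]; group
      · intro h; rw [← h]; group
    refine Prod.ext ?_ ?_
    · show s i * (π l * t * (π l)⁻¹) * s i = π (i :: l) * t * (π (i :: l))⁻¹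
      rw [cs.wordProd_cons]
      rw [mul_inv_rev, cs.inv_simple]
      group
    · show e + ((ris l).count t : ZMod 2) + (if π l * t * (π l)⁻¹ = s i then 1 else 0)
        = e + _
      push_cast
      by_cases h : π l * t * (π l)⁻¹ = s i
      · rw [if_pos h, if_pos (by simpa using hiff.mpr h)]; ring
      · rw [if_neg h, if_neg (by simpa using fun hc => h (hiff.mp hc))]; ring

lemma alternatingWord_two_mul_succ (i i' : B) (m : ℕ) :
    CoxeterSystem.alternatingWord i i' (2 * (m + 1)) =
      i :: i' :: CoxeterSystem.alternatingWord i i' (2 * m) := by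
  have h1 : 2 * (m + 1) = (2 * m + 1) + 1 := by ring
  rw [h1, CoxeterSystem.alternatingWord_succ' i i' (2 * m + 1),
    CoxeterSystem.alternatingWord_succ' i i' (2 * m)]
  simp [Nat.even_add_one, Nat.even_mul]

lemma prod_map_alternatingWord {G : Type*} [Monoid G] (f : B → G) (i i' : B) (m : ℕ) :
    ((CoxeterSystem.alternatingWord i i' (2 * m)).map f).prod = (f i * f i') ^ m := by
  induction m with
  | zero => simp [CoxeterSystem.alternatingWord]
  | succ m ih =>
    rw [alternatingWord_two_mul_succ, List.map_cons, List.map_cons, List.prod_cons,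
      List.prod_cons, ih, pow_succ']
    rw [mul_assoc]

lemma drop_alternatingWord (i i' : B) (r n : ℕ) :
    (CoxeterSystem.alternatingWord i i' n).drop r = CoxeterSystem.alternatingWord i i' (n - r) := by
  induction r generalizing n with
  | zero => simp
  | succ r ih =>
    cases n with
    | zero => simp [CoxeterSystem.alternatingWord]
    | succ n =>
      rw [CoxeterSystem.alternatingWord_succ']
      have : (((if Even n then i' else i) :: CoxeterSystem.alternatingWord i i' n).drop (r + 1))
          = (CoxeterSystem.alternatingWord i i' n).drop r := by simp
      rw [this, ih]
      congr 1
      omega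

/-- The key computation: conjugate of the appropriate simple by the alternating word product. -/
lemma alt_conj (i i' : B) (r : ℕ) :
    (π (CoxeterSystem.alternatingWord i i' r))⁻¹ * (if Even r then s i' else s i) *
      π (CoxeterSystem.alternatingWord i i' r) = ((s i * s i') ^ r)⁻¹ * s i' := by
  have hy : ∀ n : ℕ, s i' * (s i * s i') ^ n = ((s i * s i')⁻¹) ^ n * s i' := by
    intro n
    have hsc : SemiconjBy (s i') (s i * s i') (s i * s i')⁻¹ := by
      unfold SemiconjBy
      rw [mul_inv_rev, cs.inv_simple, cs.inv_simple]
      rw [← mul_assoc]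
    exact (hsc.pow_right n).eq
  rw [cs.prod_alternatingWord_eq_mul_pow]
  rcases Nat.even_or_odd r with he | ho
  · rw [if_pos he, if_pos he]
    obtain ⟨q, hq⟩ := he
    have hq2 : r / 2 = q := by omega
    rw [hq2, one_mul]
    calc ((s i * s i') ^ q)⁻¹ * s i' * (s i * s i') ^ q
        = ((s i * s i') ^ q)⁻¹ * (s i' * (s i * s i') ^ q) := by rw [mul_assoc]
      _ = ((s i * s i') ^ q)⁻¹ * (((s i * s i')⁻¹) ^ q * s i') := by rw [hy q]
      _ = (((s i * s i') ^ q)⁻¹ * ((s i * s i') ^ q)⁻¹) * s i' := by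
            rw [inv_pow, mul_assoc]
      _ = ((s i * s i') ^ r)⁻¹ * s i' := by
            rw [← mul_inv_rev, ← pow_add]
            have hqr : q + q = r := by omega
            rw [hqr]
  · have hne : ¬ Even r := Nat.not_even_iff_odd.mpr ho
    rw [if_neg hne, if_neg hne]
    obtain ⟨q, hq⟩ := ho
    have hq2 : r / 2 = q := by omega
    rw [hq2]
    have hyxy : s i' * s i * s i' = (s i * s i')⁻¹ * s i' := by
      rw [mul_inv_rev, cs.inv_simple, cs.inv_simple]
    calc (s i' * (s i * s i') ^ q)⁻¹ * s i * (s i' * (s i * s i') ^ q)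
        = ((s i * s i') ^ q)⁻¹ * (s i' * s i * s i' * (s i * s i') ^ q) := by
            rw [mul_inv_rev, cs.inv_simple]
            group
      _ = ((s i * s i') ^ q)⁻¹ * ((s i * s i')⁻¹ * (s i' * (s i * s i') ^ q)) := by
            rw [hyxy]
            group
      _ = ((s i * s i') ^ q)⁻¹ * ((s i * s i')⁻¹ * (((s i * s i')⁻¹) ^ q * s i')) := by
            rw [hy q]
      _ = (((s i * s i') ^ q)⁻¹ * (s i * s i')⁻¹ * ((s i * s i') ^ q)⁻¹) * s i' := by
            rw [inv_pow]
            group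
      _ = ((s i * s i') ^ r)⁻¹ * s i' := by
            rw [← mul_inv_rev, ← mul_inv_rev, ← pow_succ', ← pow_add]
            have hqr : q + (q + 1) = r := by omega
            rw [hqr]

lemma getD_ris_alternatingWord (i i' : B) (m k : ℕ) (hk : k < 2 * m) :
    (ris (CoxeterSystem.alternatingWord i i' (2 * m))).getD k 1 =
      ((s i * s i') ^ (2 * m - 1 - k))⁻¹ * s i' := by
  set ω := CoxeterSystem.alternatingWord i i' (2 * m) with hω
  have hlen : ω.length = 2 * m := CoxeterSystem.length_alternatingWord i i' (2 * m)
  rw [cs.getD_rightInvSeq]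
  have hdrop : ω.drop (k + 1) = CoxeterSystem.alternatingWord i i' (2 * m - 1 - k) := by
    rw [hω, drop_alternatingWord]
    congr 1
    omega
  have hget : ω[k]? = some (if Even (2 * m - 1 - k) then i' else i) := by
    have h1 : ω[k]? = (ω.drop k)[0]? := by
      rw [List.getElem?_drop]
      rfl
    rw [h1, hω, drop_alternatingWord]
    have h2 : 2 * m - k = (2 * m - 1 - k) + 1 := by omega
    rw [h2, CoxeterSystem.alternatingWord_succ']
    rfl
  rw [hdrop, hget]
  have hsimp : (Option.map cs.simple (some (if Even (2 * m - 1 - k) then i' else i))).getD 1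
      = (if Even (2 * m - 1 - k) then s i' else s i) := by
    by_cases h : Even (2 * m - 1 - k) <;> simp [h]
  rw [hsimp, alt_conj]

lemma count_ris_alternatingWord_even (i i' : B) (t : W) :
    Even ((ris (CoxeterSystem.alternatingWord i i' (2 * (M i i')))).count t) := by
  set m := M i i' with hm
  set R := ris (CoxeterSystem.alternatingWord i i' (2 * m)) with hR
  have hlen : R.length = 2 * m := by
    rw [hR, CoxeterSystem.length_rightInvSeq, CoxeterSystem.length_alternatingWord]
  have hpow : (s i * s i') ^ m = 1 := cs.simple_mul_simple_pow i i'
  have hhalf : ∀ k, k < m → R.getD k 1 = R.getD (k + m) 1 := by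
    intro k hk
    rw [hR, getD_ris_alternatingWord cs i i' m k (by omega),
      getD_ris_alternatingWord cs i i' m (k + m) (by omega)]
    have h1 : 2 * m - 1 - k = (m - 1 - k) + m := by omega
    have h2 : 2 * m - 1 - (k + m) = m - 1 - k := by omega
    rw [h1, h2, pow_add, hpow, mul_one]
  have hsplit : R = R.take m ++ R.take m := by
    have h1 : R = R.take m ++ R.drop m := (List.take_append_drop m R).symm
    have h2 : R.drop m = R.take m := by
      apply List.ext_getElem
      · rw [List.length_drop, List.length_take]
        omega
      · intro k hk1 hk2
        have hkm : k < m := by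
          rw [List.length_drop, hlen] at hk1
          omega
        have e1 : (R.drop m)[k] = R[m + k]'(by omega) := List.getElem_drop
        have e2 : (R.take m)[k] = R[k]'(by omega) := List.getElem_take
        rw [e1, e2]
        have g1 : R.getD k 1 = R[k]'(by omega) := List.getD_eq_getElem R 1 (by omega)
        have g2 : R.getD (k + m) 1 = R[k + m]'(by omega) := List.getD_eq_getElem R 1 (by omega)
        have h3 := hhalf k hkm
        rw [g1, g2] at h3
        rw [h3]
        congr 1
        omega
    nth_rewrite 2 [← h2]
    exact h1
  rw [hsplit, List.count_append]
  exact ⟨(R.take m).count t, rfl⟩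

lemma eta_liftable : M.IsLiftable (eta cs) := by
  intro i i'
  have hprod : (eta cs i * eta cs i') ^ (M i i')
      = ((CoxeterSystem.alternatingWord i i' (2 * (M i i'))).map (eta cs)).prod :=
    (prod_map_alternatingWord (eta cs) i i' (M i i')).symm
  rw [hprod]
  apply Equiv.ext
  rintro ⟨t, e⟩
  rw [prod_map_eta]
  have hπ : π (CoxeterSystem.alternatingWord i i' (2 * (M i i'))) = 1 := by
    rw [cs.prod_alternatingWord_eq_mul_pow]
    have h2 : 2 * (M i i') / 2 = M i i' := by omega
    rw [if_pos (even_two_mul _), h2, one_mul, cs.simple_mul_simple_pow]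
  have hcount : (((ris (CoxeterSystem.alternatingWord i i' (2 * (M i i')))).count t : ℕ) : ZMod 2) = 0 := by
    obtain ⟨c, hc⟩ := count_ris_alternatingWord_even cs i i' t
    rw [hc]
    push_cast
    rw [← two_mul]
    have h2 : ((2 : ℕ) : ZMod 2) = 0 := by decide
    push_cast at h2 ⊢
    rw [h2, zero_mul]
  rw [hπ, hcount, add_zero]
  simp

/-- The parity homomorphism. -/
noncomputable def phi : W →* Equiv.Perm (W × ZMod 2) :=
  cs.lift ⟨eta cs, eta_liftable cs⟩

lemma phi_wordProd (l : List B) : phi cs (π l) = ((l.map (eta cs)).prod) := by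
  unfold CoxeterSystem.wordProd
  rw [MonoidHom.map_list_prod, List.map_map]
  congr 1
  apply List.map_congr_left
  intro i _
  show phi cs (cs.simple i) = eta cs i
  exact cs.lift_apply_simple (eta_liftable cs) i

/-- Parity of the number of occurrences of `t` in the inversion sequence only depends on the
product of the word. -/
lemma count_ris_parity {l l' : List B} (h : π l = π l') (t : W) :
    (((ris l).count t : ℕ) : ZMod 2) = ((ris l').count t : ZMod 2) := by
  have h1 := congrArg (fun g => phi cs g (t, 0)) (h)
  rw [phi_wordProd, phi_wordProd, prod_map_eta, prod_map_eta] at h1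
  have h2 := congrArg Prod.snd h1
  simpa using h2

lemma ris_append (α β : List B) :
    ris (α ++ β) = (ris α).map (fun x => (π β)⁻¹ * x * π β) ++ ris β := by
  induction α with
  | nil => simp [CoxeterSystem.rightInvSeq]
  | cons a α ih =>
    show ((π (α ++ β))⁻¹ * s a * π (α ++ β)) :: ris (α ++ β) = _
    rw [ih]
    show _ = ((π β)⁻¹ * ((π α)⁻¹ * s a * π α) * π β) :: ((ris α).map _ ++ ris β)
    rw [cs.wordProd_append]
    congr 1
    rw [mul_inv_rev]
    group

lemma simple_conj_eq_iff (i : B) (x : W) : (s i * x * s i = s i) ↔ (x = s i) := by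
  constructor
  · intro h
    have h1 : s i * (s i * x * s i) * s i = x := by
      simp only [mul_assoc, cs.simple_mul_simple_cancel_left, cs.simple_mul_simple_self, mul_one]
    rw [← h1, h, cs.simple_mul_simple_self, one_mul]
  · intro h
    rw [h, cs.simple_mul_simple_self, one_mul]

lemma count_lis_eq_count_ris (ρ : List B) (v : W) :
    (lis ρ).count (π ρ * v * (π ρ)⁻¹) = (ris ρ).count v := by
  induction ρ generalizing v with
  | nil => simp [CoxeterSystem.leftInvSeq, CoxeterSystem.rightInvSeq]
  | cons j ρ ih =>
    show List.count _ (s j :: List.map (MulAut.conj (s j)) (lis ρ)) = _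
    have hrisc : ris (j :: ρ) = ((π ρ)⁻¹ * s j * π ρ) :: ris ρ := rfl
    rw [hrisc, List.count_cons, List.count_cons]
    set X := π ρ * v * (π ρ)⁻¹ with hX
    have hconj : List.count (π (j :: ρ) * v * (π (j :: ρ))⁻¹) (List.map (⇑(MulAut.conj (s j))) (lis ρ))
        = List.count X (lis ρ) := by
      have hval : π (j :: ρ) * v * (π (j :: ρ))⁻¹ = (MulAut.conj (s j)) X := by
        rw [cs.wordProd_cons, hX]
        simp only [MulAut.conj_apply, mul_inv_rev, cs.inv_simple]
        group
      rw [hval]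
      exact List.count_map_of_injective _ _ (MulAut.conj (s j)).injective _
    rw [hconj, ih]
    congr 1
    have hiff : (s j = π (j :: ρ) * v * (π (j :: ρ))⁻¹) ↔ ((π ρ)⁻¹ * s j * π ρ = v) := by
      have hshape : π (j :: ρ) * v * (π (j :: ρ))⁻¹ = s j * (π ρ * v * (π ρ)⁻¹) * s j := by
        rw [cs.wordProd_cons, mul_inv_rev, cs.inv_simple]
        group
      rw [hshape, eq_comm, simple_conj_eq_iff]
      constructor
      · intro h
        rw [← h]
        group
      · intro h
        rw [← h]
        group
    by_cases h : (π ρ)⁻¹ * s j * π ρ = v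
    · rw [if_pos (by simpa using hiff.mpr h), if_pos (by simpa using h)]
    · rw [if_neg (by simpa using fun hc => h (hiff.mp hc)), if_neg (by simpa using h)]

/-- Strong exchange property (right version, arbitrary word). -/
lemma strong_exchange (l : List B) (t : W) (hrefl : cs.IsReflection t)
    (hlt : ℓ (π l * t) < ℓ (π l)) :
    ∃ j, j < l.length ∧ π l * t = π (l.eraseIdx j) := by
  -- first, t occurs an odd number of times in `ris l`
  have htt : t * t = 1 := hrefl.mul_self
  obtain ⟨r, i, ht⟩ := hrefl
  obtain ⟨ρ, hρred, hρ⟩ := cs.exists_reduced_word' r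
  obtain ⟨τ, hτred, hτ⟩ := cs.exists_reduced_word' (π l * t)
  set tword : List B := ρ ++ ([i] ++ ρ.reverse) with htword
  have htwprod : π tword = t := by
    rw [htword, cs.wordProd_append, cs.wordProd_append, cs.wordProd_singleton,
      cs.wordProd_reverse, ht, hρ, ← mul_assoc]
  have hrefword : π (τ ++ tword) = π l := by
    rw [cs.wordProd_append, htwprod, ← hτ, mul_assoc, htt, mul_one]
  -- count t in the reference word
  have hcount_tau : (ris τ).count t = 0 := by
    rw [List.count_eq_zero]
    intro hmem
    have hinv := cs.isRightInversion_of_mem_rightInvSeq hτred hmem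
    rw [← hτ] at hinv
    have h2 := hinv.2
    rw [mul_assoc, htt, mul_one] at h2
    omega
  have hcount_ref : ((ris (τ ++ tword)).count t : ZMod 2) = 1 := by
    rw [ris_append, List.count_append]
    have h1 : List.count t ((ris τ).map (fun x => (π tword)⁻¹ * x * π tword)) = 0 := by
      have hinj : Function.Injective (fun x : W => (π tword)⁻¹ * x * π tword) :=
        fun x y hxy => mul_left_cancel (mul_right_cancel hxy)
      have hft : (π tword)⁻¹ * t * π tword = t := by
        rw [htwprod]
        group
      have hcm := List.count_map_of_injective (ris τ) _ hinj t
      rw [hft] at hcm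
      rw [hcm, hcount_tau]
    rw [h1]
    have h2 : ris tword = (ris ρ).map (fun x => (π ([i] ++ ρ.reverse))⁻¹ * x * π ([i] ++ ρ.reverse))
        ++ ris ([i] ++ ρ.reverse) := ris_append cs ρ _
    have h3 : List.count t ((ris ρ).map (fun x => (π ([i] ++ ρ.reverse))⁻¹ * x * π ([i] ++ ρ.reverse)))
        = (ris ρ).count (s i) := by
      have hβ : π ([i] ++ ρ.reverse) = s i * r⁻¹ := by
        rw [cs.wordProd_append, cs.wordProd_singleton, cs.wordProd_reverse, hρ]
      have hinj : Function.Injective (fun x : W => (π ([i] ++ ρ.reverse))⁻¹ * x * π ([i] ++ ρ.reverse)) :=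
        fun x y hxy => mul_left_cancel (mul_right_cancel hxy)
      have hval : (π ([i] ++ ρ.reverse))⁻¹ * s i * π ([i] ++ ρ.reverse) = t := by
        rw [hβ, mul_inv_rev, inv_inv, cs.inv_simple, ht]
        simp only [mul_assoc, cs.simple_mul_simple_cancel_left]
      have hcm := List.count_map_of_injective (ris ρ) _ hinj (s i)
      rw [hval] at hcm
      exact hcm
    have h4 : ris ([i] ++ ρ.reverse) = ((π ρ.reverse)⁻¹ * s i * π ρ.reverse) :: ris ρ.reverse := rfl
    have h5 : (π ρ.reverse)⁻¹ * s i * π ρ.reverse = t := by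
      rw [cs.wordProd_reverse, inv_inv, ht, hρ]
    have h6 : (ris ρ.reverse).count t = (ris ρ).count (s i) := by
      rw [cs.rightInvSeq_reverse, List.count_reverse]
      have := count_lis_eq_count_ris cs ρ ((π ρ)⁻¹ * t * π ρ)
      have hv : π ρ * ((π ρ)⁻¹ * t * π ρ) * (π ρ)⁻¹ = t := by group
      rw [hv] at this
      rw [this]
      congr 1
      rw [← hρ, ht]
      group
    rw [h2, List.count_append, h3, h4, List.count_cons, h6]
    rw [if_pos (by simpa using h5)]
    push_cast
    set c : ZMod 2 := (((ris ρ).count (s i) : ℕ) : ZMod 2) with hc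
    have hcc : c + c = 0 := by
      rw [hc]
      push_cast
      rw [← two_mul]
      have h20 : ((2 : ℕ) : ZMod 2) = 0 := by decide
      push_cast at h20
      rw [h20, zero_mul]
    calc (0 : ZMod 2) + (c + (c + 1)) = (c + c) + 1 := by ring
      _ = 1 := by rw [hcc, zero_add]
  have hparity := count_ris_parity cs hrefword t
  have hcount_l : ((ris l).count t : ZMod 2) = 1 := by rw [← hparity, hcount_ref]
  have hmem : t ∈ ris l := by
    by_contra hmem
    rw [List.count_eq_zero.mpr hmem] at hcount_l
    simp at hcount_l
  obtain ⟨n, hn, hget⟩ := List.getElem_of_mem hmem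
  refine ⟨n, ?_, ?_⟩
  · rw [← cs.length_rightInvSeq l]
    exact hn
  · have hgetD : (ris l).getD n 1 = t := by
      rw [List.getD_eq_getElem _ _ hn, hget]
    rw [← hgetD]
    exact cs.wordProd_mul_getD_rightInvSeq l n

/-- Strong exchange property (left version). -/
lemma strong_exchange_left (l : List B) (t : W) (hrefl : cs.IsReflection t)
    (hlt : ℓ (t * π l) < ℓ (π l)) :
    ∃ m, m.Sublist l ∧ m.length + 1 = l.length ∧ π m = t * π l := by
  have hrev : π l.reverse = (π l)⁻¹ := cs.wordProd_reverse l
  have hlt' : ℓ (π l.reverse * t) < ℓ (π l.reverse) := by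
    rw [hrev]
    rw [← cs.length_inv ((π l)⁻¹ * t), mul_inv_rev, inv_inv, hrefl.inv, ← cs.length_inv (π l)⁻¹,
      inv_inv]
    exact hlt
  obtain ⟨j, hj, hprod⟩ := strong_exchange cs l.reverse t hrefl hlt'
  refine ⟨(l.reverse.eraseIdx j).reverse, ?_, ?_, ?_⟩
  · have h1 : (l.reverse.eraseIdx j).Sublist l.reverse := List.eraseIdx_sublist _ j
    have h2 := h1.reverse
    rwa [List.reverse_reverse] at h2
  · rw [List.length_reverse, ← l.length_reverse]
    exact List.length_eraseIdx_add_one hj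
  · rw [cs.wordProd_reverse, ← hprod, hrev, mul_inv_rev, inv_inv, hrefl.inv]

/-- Any word contains a reduced subword with the same product. -/
lemma exists_reduced_sublist : ∀ (n : ℕ) (m : List B), m.length ≤ n →
    ∃ m', m'.Sublist m ∧ cs.IsReduced m' ∧ π m' = π m := by
  intro n
  induction n with
  | zero =>
    intro m hm
    rw [Nat.le_zero, List.length_eq_zero_iff] at hm
    subst hm
    exact ⟨[], List.Sublist.refl _, by simp [CoxeterSystem.IsReduced], rfl⟩
  | succ n ih =>
    intro m hm
    match m with
    | [] => exact ⟨[], List.Sublist.refl _, by simp [CoxeterSystem.IsReduced], rfl⟩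
    | c :: rest =>
      have hrest : rest.length ≤ n := by simpa using hm
      obtain ⟨r, hr_sub, hr_red, hr_prod⟩ := ih rest hrest
      rcases cs.length_simple_mul (π r) c with h | h
      · -- c :: r is reduced
        refine ⟨c :: r, hr_sub.cons_cons c, ?_, ?_⟩
        · unfold CoxeterSystem.IsReduced
          rw [cs.wordProd_cons, h]
          unfold CoxeterSystem.IsReduced at hr_red
          rw [hr_red, List.length_cons]
        · rw [cs.wordProd_cons, cs.wordProd_cons, hr_prod]
      · -- descent: use left exchange on r
        have hlt : ℓ (s c * π r) < ℓ (π r) := by omega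
        obtain ⟨m₂, hm₂_sub, hm₂_len, hm₂_prod⟩ :=
          strong_exchange_left cs r (s c) (cs.isReflection_simple c) hlt
        obtain ⟨m', hm'_sub, hm'_red, hm'_prod⟩ := ih m₂ (by
          have h1 := hm₂_sub.length_le
          have h3 := hr_sub.length_le
          omega)
        refine ⟨m', (hm'_sub.trans hm₂_sub).trans (hr_sub.trans (List.sublist_cons_self c rest)), hm'_red, ?_⟩
        rw [hm'_prod, hm₂_prod, hr_prod, cs.wordProd_cons]

/-! ### Bruhat order via chains -/

/-- One step of the Bruhat order. -/
def bstep (a b : W) : Prop := ∃ t, cs.IsReflection t ∧ b = a * t ∧ ℓ a < ℓ b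

/-- Bruhat order (chain form). -/
def ble : W → W → Prop := Relation.ReflTransGen (bstep cs)

lemma ble_refl (a : W) : ble cs a a := Relation.ReflTransGen.refl

lemma ble_trans {a b c : W} (h1 : ble cs a b) (h2 : ble cs b c) : ble cs a c :=
  Relation.ReflTransGen.trans h1 h2

lemma ble_length_le {a b : W} (h : ble cs a b) : ℓ a ≤ ℓ b := by
  induction h with
  | refl => exact le_refl _
  | tail h1 h2 ih =>
    obtain ⟨t, _, _, hlt⟩ := h2
    omega

lemma ble_eq_of_length_ge {a b : W} (h : ble cs a b) (hl : ℓ b ≤ ℓ a) : a = b := by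
  cases h.cases_head with
  | inl h => exact h
  | inr h =>
    obtain ⟨c, ⟨t, _, _, hlt⟩, hcb⟩ := h
    have := ble_length_le cs hcb
    omega

lemma ble_one_right {a : W} (h : ble cs a 1) : a = 1 := by
  have := ble_length_le cs h
  rw [cs.length_one] at this
  have h0 : ℓ a = 0 := by omega
  exact cs.length_eq_zero_iff.mp h0

lemma ble_ascent {b : W} {i : B} (h : ¬ cs.IsRightDescent b i) : ble cs b (b * s i) := by
  apply Relation.ReflTransGen.single
  refine ⟨s i, cs.isReflection_simple i, rfl, ?_⟩
  have h1 := cs.length_mul_simple_ne b i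
  unfold CoxeterSystem.IsRightDescent at h
  omega

lemma ble_descent {b : W} {i : B} (h : cs.IsRightDescent b i) : ble cs (b * s i) b := by
  apply Relation.ReflTransGen.single
  refine ⟨s i, cs.isReflection_simple i, ?_, ?_⟩
  · rw [mul_assoc, cs.simple_mul_simple_self, mul_one]
  · exact h

lemma ble_pi_ge {b : W} (i : B) : ble cs b (piOp cs i b) := by
  unfold piOp
  by_cases h : cs.IsRightDescent b i
  · rw [if_pos h]
    exact ble_refl cs b
  · rw [if_neg h]
    exact ble_ascent cs h

lemma ble_pib_le {b : W} (i : B) : ble cs (pibOp cs i b) b := by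
  unfold pibOp
  by_cases h : cs.IsRightDescent b i
  · rw [if_pos h]
    exact ble_descent cs h
  · rw [if_neg h]
    exact ble_refl cs b

/-- The big mutual induction: lifting properties and the subword property. -/
lemma bigLL : ∀ n : ℕ,
    (∀ a b : W, ble cs a b →
      (∀ i : B, ℓ b ≤ n → cs.IsRightDescent b i → ble cs (a * s i) b) ∧
      (∀ i : B, ℓ b + 1 ≤ n → ¬ cs.IsRightDescent a i → ¬ cs.IsRightDescent b i →
        ble cs (a * s i) (b * s i))) ∧
    (∀ (w : W) (l l' : List B), cs.IsReduced l → π l = w → l'.Sublist l → cs.IsReduced l' →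
      ℓ w ≤ n → ble cs (π l') w) := by
  intro n
  induction n using Nat.strong_induction_on with
  | _ n ih =>
  have haveLL : ∀ a b : W, ble cs a b →
      (∀ i : B, ℓ b ≤ n → cs.IsRightDescent b i → ble cs (a * s i) b) ∧
      (∀ i : B, ℓ b + 1 ≤ n → ¬ cs.IsRightDescent a i → ¬ cs.IsRightDescent b i →
        ble cs (a * s i) (b * s i)) := by
    intro a b hab
    induction hab with
    | refl =>
      constructor
      · intro i _ hdesc
        exact ble_descent cs hdesc
      · intro i _ _ _
        exact ble_refl cs _
    | @tail v b hav hstep ihv =>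
      obtain ⟨t, htrefl, hbt, hltvb⟩ := hstep
      have hstep' : bstep cs v b := ⟨t, htrefl, hbt, hltvb⟩
      constructor
      · -- L2
        intro i hn hdescb
        by_cases hdv : cs.IsRightDescent v i
        · exact ble_trans cs (ihv.1 i (by omega) hdv) (Relation.ReflTransGen.single hstep')
        · by_cases hda : cs.IsRightDescent a i
          · exact ble_trans cs (ble_descent cs hda)
              (ble_trans cs hav (Relation.ReflTransGen.single hstep'))
          · -- exchange argument
            obtain ⟨τ, hτred, hτ⟩ := cs.exists_reduced_word' (b * s i)
            have hlbs : ℓ (b * s i) + 1 = ℓ b := (cs.isRightDescent_iff).mp hdescb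
            have hlbprod : π (τ ++ [i]) = b := by
              rw [cs.wordProd_append, cs.wordProd_singleton, ← hτ, mul_assoc,
                cs.simple_mul_simple_self, mul_one]
            have hbtv : b * t = v := by
              rw [hbt, mul_assoc, htrefl.mul_self, mul_one]
            have hltSE : ℓ (π (τ ++ [i]) * t) < ℓ (π (τ ++ [i])) := by
              rw [hlbprod, hbtv]
              exact hltvb
            obtain ⟨j, hj, hprod⟩ := strong_exchange cs (τ ++ [i]) t htrefl hltSE
            rw [hlbprod, hbtv] at hprod
            have hτlen : τ.length = ℓ (b * s i) := by
              have h : ℓ (π τ) = τ.length := hτred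
              rw [← hτ] at h
              omega
            rw [List.length_append, List.length_singleton] at hj
            by_cases hjlast : j = τ.length
            · -- v = b * s i
              have herase : (τ ++ [i]).eraseIdx j = τ := by
                rw [hjlast, List.eraseIdx_eq_take_drop_succ, List.take_left,
                  List.drop_eq_nil_of_le (by rw [List.length_append, List.length_singleton]),
                  List.append_nil]
              rw [herase, ← hτ] at hprod
              -- hprod : v = b * s i
              have hvb : v * s i = b := by
                rw [hprod, mul_assoc, cs.simple_mul_simple_self, mul_one]
              rw [← hvb]
              exact ihv.2 i (by omega) hda hdv
            · -- v * s i is a subword of τ, a reduced word of b * s i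
              have hjlt : j < τ.length := by omega
              have herase : (τ ++ [i]).eraseIdx j = τ.eraseIdx j ++ [i] := by
                rw [List.eraseIdx_eq_take_drop_succ, List.eraseIdx_eq_take_drop_succ,
                  List.take_append, List.drop_append]
                have h1 : j - τ.length = 0 := by omega
                have h2 : j + 1 - τ.length = 0 := by omega
                rw [h1, h2, List.take_zero, List.drop_zero, List.append_nil, List.append_assoc]
              rw [herase, cs.wordProd_append, cs.wordProd_singleton] at hprod
              have hvs : v * s i = π (τ.eraseIdx j) := by
                rw [hprod, mul_assoc, cs.simple_mul_simple_self, mul_one]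
              obtain ⟨m', hm'sub, hm'red, hm'prod⟩ :=
                exists_reduced_sublist cs (τ.eraseIdx j).length (τ.eraseIdx j) le_rfl
              have hblebs : ble cs (v * s i) (b * s i) := by
                have hnpos : 1 ≤ n := by omega
                have hP3 := (ih (n - 1) (by omega)).2 (b * s i) τ m' hτred hτ.symm
                  (hm'sub.trans (List.eraseIdx_sublist τ j)) hm'red (by omega)
                rw [hm'prod, ← hvs] at hP3
                exact hP3
              have h1 : ble cs (a * s i) (v * s i) := ihv.2 i (by omega) hda hdv
              exact ble_trans cs h1 (ble_trans cs hblebs (ble_descent cs hdescb))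
      · -- L1
        intro i hn1 hda hdb
        by_cases hdv : cs.IsRightDescent v i
        · have h1 := ihv.1 i (by omega) hdv
          exact ble_trans cs h1
            (ble_trans cs (Relation.ReflTransGen.single hstep') (ble_ascent cs hdb))
        · have h1 := ihv.2 i (by omega) hda hdv
          refine ble_trans cs h1 (Relation.ReflTransGen.single ?_)
          refine ⟨s i * t * s i, ?_, ?_, ?_⟩
          · have := htrefl.conj (s i)
            rwa [cs.inv_simple] at this
          · rw [hbt]
            simp only [mul_assoc]
            rw [cs.simple_mul_simple_cancel_left]
          · have hv1 : ℓ (v * s i) = ℓ v + 1 := (cs.not_isRightDescent_iff).mp hdv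
            have hb1 : ℓ (b * s i) = ℓ b + 1 := (cs.not_isRightDescent_iff).mp hdb
            omega
  refine ⟨haveLL, ?_⟩
  -- P3: subword implies chain
  intro w l l' hred hprod hsub hred' hlen
  rcases List.eq_nil_or_concat l with hnil | ⟨t₀, i, hconcat⟩
  · subst hnil
    have : l' = [] := List.sublist_nil.mp hsub
    subst this
    rw [← hprod]
    exact ble_refl cs _
  · rw [List.concat_eq_append] at hconcat
    subst hconcat
    have ht₀red : cs.IsReduced t₀ := by
      have := CoxeterSystem.IsReduced.take hred t₀.length
      rwa [List.take_left] at this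
    have hlenl : t₀.length + 1 = ℓ w := by
      have hl0 : ℓ (π (t₀ ++ [i])) = (t₀ ++ [i]).length := hred
      rw [← hprod, hl0, List.length_append, List.length_singleton]
    have hprodt : π (t₀ ++ [i]) = π t₀ * s i := by
      rw [cs.wordProd_append, cs.wordProd_singleton]
    have hndt : ¬ cs.IsRightDescent (π t₀) i := by
      rw [cs.not_isRightDescent_iff, ← hprodt, hprod]
      have : ℓ (π t₀) = t₀.length := ht₀red
      omega
    obtain ⟨e₁, e₂, he, he₁, he₂⟩ := List.sublist_append_iff.mp hsub
    have hstep0 : bstep cs (π t₀) w := by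
      refine ⟨s i, cs.isReflection_simple i, by rw [← hprod, hprodt], ?_⟩
      have : ℓ (π t₀) = t₀.length := ht₀red
      omega
    rcases List.sublist_singleton.mp he₂ with h2 | h2
    · -- l' ⊆ t₀
      subst h2
      rw [List.append_nil] at he
      subst he
      have hP3 := (ih (n - 1) (by omega)).2 (π t₀) t₀ l' ht₀red rfl he₁ hred' (by
        have : ℓ (π t₀) = t₀.length := ht₀red
        omega)
      exact ble_trans cs hP3 (Relation.ReflTransGen.single hstep0)
    · -- l' = e₁ ++ [i]
      subst h2
      subst he
      have he₁red : cs.IsReduced e₁ := by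
        have := CoxeterSystem.IsReduced.take hred' e₁.length
        rwa [List.take_left] at this
      have hprode : π (e₁ ++ [i]) = π e₁ * s i := by
        rw [cs.wordProd_append, cs.wordProd_singleton]
      have hnde : ¬ cs.IsRightDescent (π e₁) i := by
        rw [cs.not_isRightDescent_iff, ← hprode]
        have h1 : ℓ (π (e₁ ++ [i])) = e₁.length + 1 := by
          have h0 : ℓ (π (e₁ ++ [i])) = (e₁ ++ [i]).length := hred'
          rw [h0, List.length_append, List.length_singleton]
        have h2 : ℓ (π e₁) = e₁.length := he₁red
        omega
      have hP3 := (ih (n - 1) (by omega)).2 (π t₀) t₀ e₁ ht₀red rfl he₁ he₁red (by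
        have : ℓ (π t₀) = t₀.length := ht₀red
        omega)
      have hL1 := (haveLL (π e₁) (π t₀) hP3).2 i (by
        have : ℓ (π t₀) = t₀.length := ht₀red
        omega) hnde hndt
      rw [← hprod, hprodt, hprode]
      exact hL1

/-- Subword implies Bruhat. -/
lemma ble_of_sublist {w : W} {l l' : List B} (hred : cs.IsReduced l) (hprod : π l = w)
    (hsub : l'.Sublist l) : ble cs (π l') w := by
  obtain ⟨m', hm'sub, hm'red, hm'prod⟩ := exists_reduced_sublist cs l'.length l' le_rfl
  rw [← hm'prod]
  exact (bigLL cs (ℓ w)).2 w l m' hred hprod (hm'sub.trans hsub) hm'red le_rfl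

lemma ble_L2 {a b : W} {i : B} (h : ble cs a b) (hd : cs.IsRightDescent b i) :
    ble cs (a * s i) b :=
  ((bigLL cs (ℓ b)).1 a b h).1 i le_rfl hd

lemma ble_L1 {a b : W} {i : B} (h : ble cs a b) (hda : ¬ cs.IsRightDescent a i)
    (hdb : ¬ cs.IsRightDescent b i) : ble cs (a * s i) (b * s i) :=
  ((bigLL cs (ℓ b + 1)).1 a b h).2 i le_rfl hda hdb

/-- Bruhat implies subword (over any reduced word). -/
lemma ble_exists_sublist {u w : W} (h : ble cs u w) :
    ∀ l : List B, cs.IsReduced l → π l = w →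
      ∃ l', l'.Sublist l ∧ cs.IsReduced l' ∧ π l' = u := by
  induction h using Relation.ReflTransGen.head_induction_on with
  | refl =>
    intro l hred hprod
    exact ⟨l, List.Sublist.refl l, hred, hprod⟩
  | head hstep h2 ih =>
    rename_i x y
    intro l hred hprod
    obtain ⟨m, hmsub, hmred, hmprod⟩ := ih l hred hprod
    obtain ⟨t, htrefl, hyt, hlt⟩ := hstep
    have hyx : π m * t = x := by rw [hmprod, hyt, mul_assoc, htrefl.mul_self, mul_one]
    have hSE : ℓ (π m * t) < ℓ (π m) := by
      rw [hyx, hmprod]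
      exact hlt
    obtain ⟨j, hj, hprodj⟩ := strong_exchange cs m t htrefl hSE
    obtain ⟨m', hm'sub, hm'red, hm'prod⟩ :=
      exists_reduced_sublist cs (m.eraseIdx j).length (m.eraseIdx j) le_rfl
    refine ⟨m', (hm'sub.trans (List.eraseIdx_sublist m j)).trans hmsub, hm'red, ?_⟩
    rw [hm'prod, ← hprodj, hyx]

lemma ble_L3 {a b : W} {i : B} (h : ble cs a b) (hda : cs.IsRightDescent a i)
    (hdb : cs.IsRightDescent b i) : ble cs (a * s i) (b * s i) := by
  · -- choose reduced word of b ending with i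
    obtain ⟨τ, hτred, hτ⟩ := cs.exists_reduced_word' (b * s i)
    have hlbs : ℓ (b * s i) + 1 = ℓ b := (cs.isRightDescent_iff).mp hdb
    have hlbprod : π (τ ++ [i]) = b := by
      rw [cs.wordProd_append, cs.wordProd_singleton, ← hτ, mul_assoc,
        cs.simple_mul_simple_self, mul_one]
    have hlred : cs.IsReduced (τ ++ [i]) := by
      unfold CoxeterSystem.IsReduced
      rw [hlbprod, List.length_append, List.length_singleton]
      have : ℓ (π τ) = τ.length := hτred
      rw [← hτ] at this
      omega
    obtain ⟨l', hl'sub, hl'red, hl'prod⟩ := ble_exists_sublist cs h (τ ++ [i]) hlred hlbprod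
    obtain ⟨e₁, e₂, he, he₁, he₂⟩ := List.sublist_append_iff.mp hl'sub
    rcases List.sublist_singleton.mp he₂ with h2 | h2
    · -- a is a subword of τ : a ≤ b * s i, so a * s i < a ≤ b * s i
      subst h2
      rw [List.append_nil] at he
      subst he
      have h1 : ble cs a (b * s i) := by
        rw [← hl'prod]
        exact ble_of_sublist cs hτred hτ.symm he₁
      exact ble_trans cs (ble_descent cs hda) h1
    · subst h2
      subst he
      -- a = π e₁ * s i, so a * s i = π e₁ ≤ π τ = b * s i
      have hprode : π (e₁ ++ [i]) = π e₁ * s i := by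
        rw [cs.wordProd_append, cs.wordProd_singleton]
      have has : a * s i = π e₁ := by
        rw [← hl'prod, hprode, mul_assoc, cs.simple_mul_simple_self, mul_one]
      rw [has]
      exact ble_of_sublist cs hτred hτ.symm he₁

lemma ble_L4 {a b : W} {i : B} (h : ble cs a b) (hda : ¬ cs.IsRightDescent a i)
    (hdb : cs.IsRightDescent b i) : ble cs a (b * s i) := by
  obtain ⟨τ, hτred, hτ⟩ := cs.exists_reduced_word' (b * s i)
  have hlbs : ℓ (b * s i) + 1 = ℓ b := (cs.isRightDescent_iff).mp hdb
  have hlbprod : π (τ ++ [i]) = b := by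
    rw [cs.wordProd_append, cs.wordProd_singleton, ← hτ, mul_assoc,
      cs.simple_mul_simple_self, mul_one]
  have hlred : cs.IsReduced (τ ++ [i]) := by
    unfold CoxeterSystem.IsReduced
    rw [hlbprod, List.length_append, List.length_singleton]
    have : ℓ (π τ) = τ.length := hτred
    rw [← hτ] at this
    omega
  obtain ⟨l', hl'sub, hl'red, hl'prod⟩ := ble_exists_sublist cs h (τ ++ [i]) hlred hlbprod
  obtain ⟨e₁, e₂, he, he₁, he₂⟩ := List.sublist_append_iff.mp hl'sub
  rcases List.sublist_singleton.mp he₂ with h2 | h2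
  · subst h2
    rw [List.append_nil] at he
    subst he
    rw [← hl'prod]
    exact ble_of_sublist cs hτred hτ.symm he₁
  · subst h2
    subst he
    exfalso
    apply hda
    have he₁red : cs.IsReduced e₁ := by
      have := CoxeterSystem.IsReduced.take hl'red e₁.length
      rwa [List.take_left] at this
    have hprode : π (e₁ ++ [i]) = π e₁ * s i := by
      rw [cs.wordProd_append, cs.wordProd_singleton]
    rw [cs.isRightDescent_iff]
    have h1 : ℓ (π (e₁ ++ [i])) = e₁.length + 1 := by
      rw [hl'red]
      rw [List.length_append, List.length_singleton]
    have h2 : ℓ (π e₁) = e₁.length := he₁red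
    have h3 : a * s i = π e₁ := by
      rw [← hl'prod, hprode, mul_assoc, cs.simple_mul_simple_self, mul_one]
    rw [h3, h2, ← hl'prod, h1]

/-- The splitting lemma : if `c ≤ a * sᵢ` with `a * sᵢ > a`, then `c ≤ a`, or `c` has
`i` as a descent and `c * sᵢ ≤ a`. -/
lemma ble_split {a c : W} {i : B} (hna : ¬ cs.IsRightDescent a i)
    (h : ble cs c (a * s i)) :
    ble cs c a ∨ (cs.IsRightDescent c i ∧ ble cs (c * s i) a) := by
  obtain ⟨ρ, hρred, hρ⟩ := cs.exists_reduced_word' a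
  have hlprod : π (ρ ++ [i]) = a * s i := by
    rw [cs.wordProd_append, cs.wordProd_singleton, ← hρ]
  have hlas : ℓ (a * s i) = ℓ a + 1 := (cs.not_isRightDescent_iff).mp hna
  have hlred : cs.IsReduced (ρ ++ [i]) := by
    unfold CoxeterSystem.IsReduced
    rw [hlprod, List.length_append, List.length_singleton]
    have : ℓ (π ρ) = ρ.length := hρred
    rw [← hρ] at this
    omega
  obtain ⟨l', hl'sub, hl'red, hl'prod⟩ := ble_exists_sublist cs h (ρ ++ [i]) hlred hlprod
  obtain ⟨e₁, e₂, he, he₁, he₂⟩ := List.sublist_append_iff.mp hl'sub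
  rcases List.sublist_singleton.mp he₂ with h2 | h2
  · subst h2
    rw [List.append_nil] at he
    subst he
    left
    rw [← hl'prod]
    exact ble_of_sublist cs hρred hρ.symm he₁
  · subst h2
    subst he
    right
    have he₁red : cs.IsReduced e₁ := by
      have := CoxeterSystem.IsReduced.take hl'red e₁.length
      rwa [List.take_left] at this
    have hprode : π (e₁ ++ [i]) = π e₁ * s i := by
      rw [cs.wordProd_append, cs.wordProd_singleton]
    have hcs : c * s i = π e₁ := by
      rw [← hl'prod, hprode, mul_assoc, cs.simple_mul_simple_self, mul_one]
    constructor
    · rw [cs.isRightDescent_iff]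
      have h1 : ℓ (π (e₁ ++ [i])) = e₁.length + 1 := by
        have h0 : ℓ (π (e₁ ++ [i])) = (e₁ ++ [i]).length := hl'red
        rw [h0, List.length_append, List.length_singleton]
      have h2 : ℓ (π e₁) = e₁.length := he₁red
      rw [hcs, h2, ← hl'prod, h1]
    · rw [hcs]
      exact ble_of_sublist cs hρred hρ.symm he₁

/-! ### Monotonicity of the operators, and the Demazure product -/

lemma desc_piOp (x : W) (i : B) : cs.IsRightDescent (piOp cs i x) i := by
  unfold piOp
  by_cases h : cs.IsRightDescent x i
  · rw [if_pos h]
    exact h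
  · rw [if_neg h]
    unfold CoxeterSystem.IsRightDescent
    rw [mul_assoc, cs.simple_mul_simple_self, mul_one]
    have h1 := cs.length_mul_simple_ne x i
    unfold CoxeterSystem.IsRightDescent at h
    omega

lemma piOp_mono {x y : W} (i : B) (h : ble cs x y) :
    ble cs (piOp cs i x) (piOp cs i y) := by
  unfold piOp
  by_cases hy : cs.IsRightDescent y i
  · rw [if_pos hy]
    by_cases hx : cs.IsRightDescent x i
    · rw [if_pos hx]
      exact h
    · rw [if_neg hx]
      exact ble_L2 cs h hy
  · rw [if_neg hy]
    by_cases hx : cs.IsRightDescent x i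
    · rw [if_pos hx]
      exact ble_trans cs h (ble_ascent cs hy)
    · rw [if_neg hx]
      exact ble_L1 cs h hx hy

lemma pibOp_mono {x y : W} (i : B) (h : ble cs x y) :
    ble cs (pibOp cs i x) (pibOp cs i y) := by
  unfold pibOp
  by_cases hy : cs.IsRightDescent y i
  · rw [if_pos hy]
    by_cases hx : cs.IsRightDescent x i
    · rw [if_pos hx]
      exact ble_L3 cs h hx hy
    · rw [if_neg hx]
      exact ble_L4 cs h hx hy
  · rw [if_neg hy]
    exact ble_trans cs (ble_pib_le cs i) h

lemma pib_pi_le (x : W) (i : B) : ble cs (pibOp cs i (piOp cs i x)) x := by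
  have hd := desc_piOp cs x i
  unfold pibOp
  rw [if_pos hd]
  unfold piOp
  by_cases h : cs.IsRightDescent x i
  · rw [if_pos h]
    exact ble_descent cs h
  · rw [if_neg h]
    rw [mul_assoc, cs.simple_mul_simple_self, mul_one]
    exact ble_refl cs x

/-- `z` is the Demazure product `w ⋆ a` (characterized as max of `{w * c : c ≤ a}`). -/
def IsDem (w a z : W) : Prop :=
  (∃ c, ble cs c a ∧ z = w * c) ∧ (∀ c, ble cs c a → ble cs (w * c) z)

lemma isDem_unique {w a z₁ z₂ : W} (h1 : IsDem cs w a z₁) (h2 : IsDem cs w a z₂) : z₁ = z₂ := by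
  obtain ⟨⟨c₁, hc₁, hz₁⟩, hmax₁⟩ := h1
  obtain ⟨⟨c₂, hc₂, hz₂⟩, hmax₂⟩ := h2
  have h12 : ble cs z₁ z₂ := by
    rw [hz₁]
    exact hmax₂ c₁ hc₁
  have h21 : ble cs z₂ z₁ := by
    rw [hz₂]
    exact hmax₁ c₂ hc₂
  exact ble_eq_of_length_ge cs h12 (ble_length_le cs h21)

lemma isDem_one (w : W) : IsDem cs w 1 w := by
  constructor
  · exact ⟨1, ble_refl cs 1, (mul_one w).symm⟩
  · intro c hc
    rw [ble_one_right cs hc, mul_one]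
    exact ble_refl cs w

lemma ble_mul_lift {c a : W} {i : B} (hna : ¬ cs.IsRightDescent a i) (hc : ble cs c a) :
    ble cs (c * s i) (a * s i) := by
  by_cases hdc : cs.IsRightDescent c i
  · exact ble_trans cs (ble_descent cs hdc) (ble_trans cs hc (ble_ascent cs hna))
  · exact ble_L1 cs hc hdc hna

lemma isDem_step {w a z : W} {i : B} (hna : ¬ cs.IsRightDescent a i) (hz : IsDem cs w a z) :
    IsDem cs w (a * s i) (piOp cs i z) := by
  obtain ⟨⟨c₀, hc₀, hzw⟩, hmax⟩ := hz
  constructor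
  · unfold piOp
    by_cases hdz : cs.IsRightDescent z i
    · rw [if_pos hdz]
      exact ⟨c₀, ble_trans cs hc₀ (ble_ascent cs hna), hzw⟩
    · rw [if_neg hdz]
      exact ⟨c₀ * s i, ble_mul_lift cs hna hc₀, by rw [hzw, mul_assoc]⟩
  · intro c hc
    rcases ble_split cs hna hc with h | ⟨hdc, h⟩
    · exact ble_trans cs (hmax c h) (ble_pi_ge cs i)
    · have h1 : ble cs (w * (c * s i)) z := hmax _ h
      have h2 : w * c = (w * (c * s i)) * s i := by
        rw [mul_assoc, mul_assoc, cs.simple_mul_simple_self, mul_one]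
      rw [h2]
      unfold piOp
      by_cases hdz : cs.IsRightDescent z i
      · rw [if_pos hdz]
        exact ble_L2 cs h1 hdz
      · rw [if_neg hdz]
        by_cases hdw : cs.IsRightDescent (w * (c * s i)) i
        · exact ble_trans cs (ble_descent cs hdw) (ble_trans cs h1 (ble_ascent cs hdz))
        · exact ble_L1 cs h1 hdw hdz

lemma exists_isDem (w : W) : ∀ (n : ℕ) (a : W), ℓ a ≤ n → ∃ z, IsDem cs w a z := by
  intro n
  induction n with
  | zero =>
    intro a ha
    have : a = 1 := cs.length_eq_zero_iff.mp (by omega)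
    subst this
    exact ⟨w, isDem_one cs w⟩
  | succ n ihn =>
    intro a ha
    by_cases h1 : a = 1
    · subst h1
      exact ⟨w, isDem_one cs w⟩
    · obtain ⟨i, hi⟩ := cs.exists_rightDescent_of_ne_one h1
      have hlen : ℓ (a * s i) + 1 = ℓ a := (cs.isRightDescent_iff).mp hi
      obtain ⟨z₀, hz₀⟩ := ihn (a * s i) (by omega)
      have hnd : ¬ cs.IsRightDescent (a * s i) i := by
        unfold CoxeterSystem.IsRightDescent
        rw [mul_assoc, cs.simple_mul_simple_self, mul_one]
        omega
      refine ⟨piOp cs i z₀, ?_⟩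
      have := isDem_step cs hnd hz₀
      rwa [mul_assoc, cs.simple_mul_simple_self, mul_one] at this

lemma isDem_descent {w a z : W} {i : B} (hz : IsDem cs w a z) (hd : cs.IsRightDescent a i) :
    cs.IsRightDescent z i := by
  obtain ⟨⟨c₀, hc₀, hzw⟩, hmax⟩ := hz
  have hcs : ble cs (c₀ * s i) a := by
    by_cases hdc : cs.IsRightDescent c₀ i
    · exact ble_trans cs (ble_descent cs hdc) hc₀
    · exact ble_L2 cs hc₀ hd
  have h1 : ble cs (z * s i) z := by
    have h2 : z * s i = w * (c₀ * s i) := by rw [hzw, mul_assoc]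
    rw [h2]
    exact hmax _ hcs
  have h3 := ble_length_le cs h1
  have h4 := cs.length_mul_simple_ne z i
  unfold CoxeterSystem.IsRightDescent
  omega

/-! ### The main induction over the biHecke monoid -/

lemma main_aux (L : List (Function.End W))
    (hmem : ∀ g ∈ L, g ∈ ({f | ∃ i, f = piOp cs i} ∪ {f | ∃ i, f = pibOp cs i} :
      Set (Function.End W))) (w : W) :
    ∃ z, IsDem cs w (L.prod 1) z ∧ ble cs (L.prod w) z := by
  induction L generalizing w with
  | nil =>
    exact ⟨w, isDem_one cs w, ble_refl cs w⟩
  | cons g L ihL =>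
    have hgen := hmem g List.mem_cons_self
    have hLm : ∀ g' ∈ L, g' ∈ ({f | ∃ i, f = piOp cs i} ∪ {f | ∃ i, f = pibOp cs i} :
        Set (Function.End W)) := fun g' h' => hmem g' (List.mem_cons_of_mem g h')
    obtain ⟨z, hzdem, hzle⟩ := ihL hLm w
    have happ : ∀ x : W, ((g :: L).prod) x = g (L.prod x) := by
      intro x
      rw [List.prod_cons]
      rfl
    set a := L.prod 1 with ha
    rcases hgen with ⟨i, rfl⟩ | ⟨i, rfl⟩
    · -- antisorting operator π_i
      by_cases hda : cs.IsRightDescent a i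
      · refine ⟨z, ?_, ?_⟩
        · have h1 : piOp cs i a = a := by unfold piOp; rw [if_pos hda]
          rw [happ 1, ← ha, h1]
          exact hzdem
        · rw [happ w]
          have hdz := isDem_descent cs hzdem hda
          show ble cs (piOp cs i (L.prod w)) z
          unfold piOp
          by_cases hdx : cs.IsRightDescent (L.prod w) i
          · rw [if_pos hdx]
            exact hzle
          · rw [if_neg hdx]
            exact ble_L2 cs hzle hdz
      · refine ⟨piOp cs i z, ?_, ?_⟩
        · have h1 : piOp cs i a = a * s i := by unfold piOp; rw [if_neg hda]
          rw [happ 1, ← ha, h1]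
          exact isDem_step cs hda hzdem
        · rw [happ w]
          exact piOp_mono cs i hzle
    · -- sorting operator π̄_i
      by_cases hda : cs.IsRightDescent a i
      · have hlen : ℓ (a * s i) + 1 = ℓ a := (cs.isRightDescent_iff).mp hda
        obtain ⟨z₂, hz₂⟩ := exists_isDem cs w (ℓ (a * s i)) (a * s i) le_rfl
        have hnd : ¬ cs.IsRightDescent (a * s i) i := by
          unfold CoxeterSystem.IsRightDescent
          rw [mul_assoc, cs.simple_mul_simple_self, mul_one]
          omega
        have hzeq : z = piOp cs i z₂ := by
          apply isDem_unique cs hzdem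
          have := isDem_step cs hnd hz₂
          rwa [mul_assoc, cs.simple_mul_simple_self, mul_one] at this
        refine ⟨z₂, ?_, ?_⟩
        · have h1 : pibOp cs i a = a * s i := by unfold pibOp; rw [if_pos hda]
          rw [happ 1, ← ha, h1]
          exact hz₂
        · rw [happ w]
          have h1 : ble cs (pibOp cs i (L.prod w)) (pibOp cs i z) := pibOp_mono cs i hzle
          have h2 : ble cs (pibOp cs i z) z₂ := by
            rw [hzeq]
            exact pib_pi_le cs z₂ i
          exact ble_trans cs h1 h2
      · refine ⟨z, ?_, ?_⟩
        · have h1 : pibOp cs i a = a := by unfold pibOp; rw [if_neg hda]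
          rw [happ 1, ← ha, h1]
          exact hzdem
        · rw [happ w]
          exact ble_trans cs (ble_pib_le cs i) hzle

end BHAux

/-- Any element of the biHecke monoid fixing the identity is contracting for Bruhat order. -/
theorem biHecke_fix_one_contracting {B W : Type*} [Group W] [Finite W] {M : CoxeterMatrix B}
    (cs : CoxeterSystem M W) (f : Function.End W) (hf : f ∈ biHecke cs)
    (h1 : f 1 = 1) (w : W) : leB cs (f w) w := by
  obtain ⟨L, hLmem, hLprod⟩ := Submonoid.exists_list_of_mem_closure hf
  obtain ⟨z, hdem, hle⟩ := BHAux.main_aux cs L hLmem w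
  rw [hLprod] at hdem hle
  rw [h1] at hdem
  have hzw : z = w := BHAux.isDem_unique cs hdem (BHAux.isDem_one cs w)
  rw [hzw] at hle
  obtain ⟨l, hred, hl⟩ := cs.exists_reduced_word' w
  obtain ⟨l', hsub, _, hprod⟩ := BHAux.ble_exists_sublist cs hle l hred hl.symm
  exact ⟨l, hred, hl.symm, l', hsub, hprod⟩
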